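/- For every integer k ≥ 1, the following identity of formal power series in q holds: Σ_{n=1}^∞ η̄_{2k−1}(n) q^n = (1/(q;q)_∞) · Σ_{n=1}^∞ (−1)^{n−1} q^{n(3n−1)/2 + kn} / (1 − q^n)^{2k−1}. -/

import Mathlib

open PowerSeries

/-- The rank of a partition: its largest part minus its number of parts. -/
def Nat.Partition.rank {n : ℕ} (p : n.Partition) : ℤ :=
  (p.parts.sup : ℤ) - (p.parts.card : ℤ)

/-- `N(m,n)`: the number of partitions of `n` with rank `m`. -/
noncomputable def rankCount (m : ℤ) (n : ℕ) : ℕ :=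
  Nat.card {p : n.Partition // p.rank = m}

/-- The symmetrized positive rank moment
`η̄_{2k-1}(n) = Σ_{m ≥ 1} binom(m + k - 1, 2k - 1)·N(m,n)` (the summation index `m : ℕ`
below stands for the rank `m + 1`). -/
noncomputable def etaBarOdd (k n : ℕ) : ℤ :=
  ∑' m : ℕ, Ring.choose ((m : ℤ) + (k : ℤ)) (2 * k - 1) * (rankCount ((m : ℤ) + 1) n : ℤ)

/-- The infinite product `(q;q)_∞ = ∏_{n≥1} (1 - q^n)` as a formal power series in
`ℤ⟦X⟧`: its `N`-th coefficient is the (stable) `N`-th coefficient of the partial products. -/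
noncomputable def qPochhammerInf : PowerSeries ℤ :=
  PowerSeries.mk fun N =>
    PowerSeries.coeff (R := ℤ) N (∏ n ∈ Finset.range (N + 1), (1 - PowerSeries.X ^ (n + 1)))

/-- The sum `Σ_{j≥0} f j` of a family of power series in which `f j` has `X`-order
greater than `j`, so each coefficient receives only finitely many contributions. -/
noncomputable def seriesSum (f : ℕ → PowerSeries ℤ) : PowerSeries ℤ :=
  PowerSeries.mk fun N => ∑ j ∈ Finset.range (N + 1), PowerSeries.coeff (R := ℤ) N (f j)

namespace EtaAux


open Finset

/-- number of partitions of n with rank ≥ m -/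
noncomputable def Ng (m : ℕ) (n : ℕ) : ℕ :=
  (Finset.univ.filter fun p : n.Partition => (m : ℤ) ≤ p.rank).card

noncomputable def pcard (n : ℕ) : ℕ := Fintype.card n.Partition

lemma rankCount_eq (m : ℤ) (n : ℕ) :
    rankCount m n = (Finset.univ.filter fun p : n.Partition => p.rank = m).card := by
  rw [rankCount, Nat.card_eq_fintype_card, Fintype.card_subtype]

lemma parts_card_le {n : ℕ} (p : n.Partition) : p.parts.card ≤ n := by
  classical
  have h := Multiset.card_nsmul_le_sum (s := p.parts) (a := 1) fun x hx => p.parts_pos hx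
  rw [p.parts_sum] at h
  simpa using h

lemma parts_sup_le {n : ℕ} (p : n.Partition) : p.parts.sup ≤ n := by
  rw [Multiset.sup_le]
  intro b hb
  rw [← p.parts_sum]
  exact Multiset.single_le_sum (fun x _ => Nat.zero_le x) b hb

lemma parts_ne_zero {n : ℕ} (hn : 1 ≤ n) (p : n.Partition) : p.parts ≠ 0 := by
  intro h
  have := p.parts_sum
  rw [h] at this
  simp at this
  omega

lemma one_le_card {n : ℕ} (hn : 1 ≤ n) (p : n.Partition) : 1 ≤ p.parts.card := by
  have := parts_ne_zero hn p
  rcases Multiset.exists_mem_of_ne_zero this with ⟨a, ha⟩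
  exact Multiset.card_pos_iff_exists_mem.2 ⟨a, ha⟩

lemma rank_le {n : ℕ} (hn : 1 ≤ n) (p : n.Partition) : p.rank ≤ (n : ℤ) - 1 := by
  have h1 := parts_sup_le p
  have h2 := one_le_card hn p
  unfold Nat.Partition.rank
  have : (p.parts.sup : ℤ) ≤ n := by exact_mod_cast h1
  have : (1 : ℤ) ≤ p.parts.card := by exact_mod_cast h2
  omega

lemma rank_zero (p : (0:ℕ).Partition) : p.rank = 0 := by
  have : p.parts = 0 := p.partition_zero_parts
  unfold Nat.Partition.rank
  rw [this]
  simp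

lemma Ng_eq_zero {m n : ℕ} (h : n ≤ m) (hm : 1 ≤ m) : Ng m n = 0 := by
  rw [Ng, Finset.card_eq_zero, Finset.filter_eq_empty_iff]
  intro p _
  rcases Nat.eq_zero_or_pos n with hn | hn
  · subst hn
    rw [rank_zero p]
    simp only [not_le]
    exact_mod_cast hm
  · have := rank_le hn p
    simp only [not_le]
    have hnm : (n : ℤ) ≤ m := by exact_mod_cast h
    omega

lemma Ng_split (m : ℕ) (n : ℕ) :
    Ng m n = rankCount (m : ℤ) n + Ng (m+1) n := by
  classical
  rw [Ng, Ng, rankCount_eq]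
  have hsplit : (Finset.univ.filter fun p : n.Partition => (m : ℤ) ≤ p.rank)
      = (Finset.univ.filter fun p : n.Partition => p.rank = (m:ℤ))
        ∪ (Finset.univ.filter fun p : n.Partition => ((m+1 : ℕ) : ℤ) ≤ p.rank) := by
    ext p
    simp only [Finset.mem_filter, Finset.mem_union, Finset.mem_univ, true_and]
    push_cast
    omega
  rw [hsplit, Finset.card_union_of_disjoint]
  rw [Finset.disjoint_left]
  intro p hp hp'
  simp only [Finset.mem_filter, Finset.mem_univ, true_and] at hp hp'
  push_cast at hp'
  omega




lemma sum_filter_ne_zero (s : Multiset ℕ) : (s.filter (· ≠ 0)).sum = s.sum := by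
  conv_rhs => rw [← Multiset.filter_add_not (· ≠ 0) s]
  rw [Multiset.sum_add]
  have : (s.filter fun x => ¬ x ≠ 0).sum = 0 := by
    rw [Multiset.sum_eq_zero]
    intro x hx
    have := Multiset.of_mem_filter hx
    simpa using this
  omega

lemma sum_map_pred (s : Multiset ℕ) (h : ∀ x ∈ s, 1 ≤ x) :
    (s.map (· - 1)).sum = s.sum - Multiset.card s := by
  induction s using Multiset.induction_on with
  | empty => simp
  | cons a t ih =>
    have ha : 1 ≤ a := h a (Multiset.mem_cons_self a t)
    have ht : ∀ x ∈ t, 1 ≤ x := fun x hx => h x (Multiset.mem_cons_of_mem hx)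
    have hts : Multiset.card t ≤ t.sum := by
      have := Multiset.card_nsmul_le_sum (s := t) (a := 1) ht
      simpa using this
    rw [Multiset.map_cons, Multiset.sum_cons, Multiset.sum_cons, Multiset.card_cons, ih ht]
    omega

lemma card_le_sum' (s : Multiset ℕ) (h : ∀ x ∈ s, 1 ≤ x) : Multiset.card s ≤ s.sum := by
  have := Multiset.card_nsmul_le_sum (s := s) (a := 1) h
  simpa using this

lemma sup_mem_of_ne_zero {s : Multiset ℕ} (h : s ≠ 0) : s.sup ∈ s := by
  induction s using Multiset.induction_on with
  | empty => simp at h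
  | cons a t ih =>
    rcases eq_or_ne t 0 with rfl | ht
    · simp
    · rw [Multiset.sup_cons]
      rcases le_total a t.sup with h1 | h1
      · rw [sup_eq_right.2 h1]
        exact Multiset.mem_cons_of_mem (ih ht)
      · rw [sup_eq_left.2 h1]
        exact Multiset.mem_cons_self a t

section Dyson

variable (m N : ℕ)

/-- Dyson's map: a partition of `N` with rank ≤ m+2 goes to a partition of `N+m+1`
with rank ≥ m: new largest part `ℓ + m + 1`, rest is the old partition minus its
first column. -/
def dysonMap (p : N.Partition) : (N + m + 1).Partition where
  parts := (Multiset.card p.parts + m + 1) ::ₘ ((p.parts.map (· - 1)).filter (· ≠ 0))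
  parts_pos := by
    intro i hi
    rcases Multiset.mem_cons.1 hi with rfl | hi
    · omega
    · have := Multiset.of_mem_filter hi
      omega
  parts_sum := by
    rw [Multiset.sum_cons, sum_filter_ne_zero,
      sum_map_pred _ (fun x hx => p.parts_pos hx), p.parts_sum]
    have h1 : Multiset.card p.parts ≤ N := by
      have := card_le_sum' p.parts (fun x hx => p.parts_pos hx)
      rwa [p.parts_sum] at this
    omega

/-- Dyson's inverse map. -/
def dysonInv (q : (N + m + 1).Partition) (hq : (m : ℤ) ≤ q.rank) : N.Partition where
  parts := ((q.parts.erase q.parts.sup).map (· + 1)) +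
    Multiset.replicate (q.parts.sup - m - 1 - (Multiset.card q.parts - 1)) 1
  parts_pos := by
    intro i hi
    rcases Multiset.mem_add.1 hi with hi | hi
    · rcases Multiset.mem_map.1 hi with ⟨x, _, rfl⟩
      omega
    · have := Multiset.eq_of_mem_replicate hi
      omega
  parts_sum := by
    have hne : q.parts ≠ 0 := by
      intro h0
      have := q.parts_sum
      rw [h0] at this
      simp at this
    have hmem : q.parts.sup ∈ q.parts := sup_mem_of_ne_zero hne
    have hcons := Multiset.cons_erase hmem
    have hsum : q.parts.sup + (q.parts.erase q.parts.sup).sum = N + m + 1 := by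
      rw [← Multiset.sum_cons, hcons, q.parts_sum]
    have hcard : Multiset.card (q.parts.erase q.parts.sup) + 1 = Multiset.card q.parts := by
      rw [← Multiset.card_cons, hcons]
    have hrank : Multiset.card q.parts + m ≤ q.parts.sup := by
      have := hq
      unfold Nat.Partition.rank at this
      omega
    have hsup_le : q.parts.sup ≤ N + m + 1 := by
      have h2 : q.parts.sup ≤ q.parts.sum :=
        Multiset.sup_le.2 fun b hb => Multiset.single_le_sum (fun x _ => Nat.zero_le x) b hb
      rwa [q.parts_sum] at h2
    rw [Multiset.sum_add, Multiset.sum_replicate]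
    have hmap : ((q.parts.erase q.parts.sup).map (· + 1)).sum
        = (q.parts.erase q.parts.sup).sum + Multiset.card (q.parts.erase q.parts.sup) := by
      induction (q.parts.erase q.parts.sup) using Multiset.induction_on with
      | empty => simp
      | cons a t ih => simp [ih]; omega
    rw [hmap]
    simp only [smul_eq_mul, mul_one]
    omega

lemma dysonMap_parts (p : N.Partition) : (dysonMap m N p).parts
    = (Multiset.card p.parts + m + 1) ::ₘ ((p.parts.map (· - 1)).filter (· ≠ 0)) := rfl

lemma dysonMap_sup (p : N.Partition) (hp : p.rank ≤ (m : ℤ) + 2) :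
    (dysonMap m N p).parts.sup = Multiset.card p.parts + m + 1 := by
  have hps : p.parts.sup ≤ Multiset.card p.parts + m + 2 := by
    unfold Nat.Partition.rank at hp
    omega
  rw [dysonMap_parts, Multiset.sup_cons]
  rw [sup_eq_left]
  rw [Multiset.sup_le]
  intro b hb
  rcases Multiset.mem_map.1 (Multiset.mem_of_mem_filter hb) with ⟨y, hy, rfl⟩
  have := Multiset.le_sup hy
  omega

lemma dysonMap_rank (p : N.Partition) (hp : p.rank ≤ (m : ℤ) + 2) :
    (m : ℤ) ≤ (dysonMap m N p).rank := by
  have hsup := dysonMap_sup m N p hp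
  have hcard : Multiset.card (dysonMap m N p).parts
      = 1 + Multiset.card ((p.parts.map (· - 1)).filter (· ≠ 0)) := by
    rw [dysonMap_parts, Multiset.card_cons]
    omega
  have hle : Multiset.card ((p.parts.map (· - 1)).filter (· ≠ 0))
      ≤ Multiset.card p.parts := by
    calc Multiset.card ((p.parts.map (· - 1)).filter (· ≠ 0))
        ≤ Multiset.card (p.parts.map (· - 1)) :=
          Multiset.card_le_card (Multiset.filter_le _ _)
      _ = Multiset.card p.parts := Multiset.card_map _ _
  unfold Nat.Partition.rank
  rw [hsup, hcard]
  push_cast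
  omega

lemma dysonInv_dysonMap (p : N.Partition) (hp : p.rank ≤ (m : ℤ) + 2)
    (h : (m : ℤ) ≤ (dysonMap m N p).rank) :
    dysonInv m N (dysonMap m N p) h = p := by
  apply Nat.Partition.ext
  show ((dysonMap m N p).parts.erase (dysonMap m N p).parts.sup).map (· + 1) +
    Multiset.replicate ((dysonMap m N p).parts.sup - m - 1 -
      (Multiset.card (dysonMap m N p).parts - 1)) 1 = p.parts
  rw [dysonMap_sup m N p hp, dysonMap_parts, Multiset.erase_cons_head,
    Multiset.card_cons]
  set s := (p.parts.map (· - 1)).filter (· ≠ 0) with hs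
  have hsplit : s = (p.parts.filter fun y => y - 1 ≠ 0).map (· - 1) := by
    rw [hs, Multiset.filter_map]
    rfl
  have hmapped : s.map (· + 1) = p.parts.filter fun y => y - 1 ≠ 0 := by
    rw [hsplit, Multiset.map_map]
    have : ∀ y ∈ p.parts.filter fun y => y - 1 ≠ 0, ((· + 1) ∘ (· - 1)) y = y := by
      intro y hy
      have := Multiset.of_mem_filter hy
      simp only [Function.comp_apply]
      omega
    rw [Multiset.map_congr rfl this, Multiset.map_id']
  have hcards : Multiset.card (p.parts.filter fun y => y - 1 ≠ 0)
      + Multiset.card (p.parts.filter fun y => ¬ (y - 1 ≠ 0)) = Multiset.card p.parts := by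
    rw [← Multiset.card_add, Multiset.filter_add_not]
  have hcs : Multiset.card s = Multiset.card (p.parts.filter fun y => y - 1 ≠ 0) := by
    rw [hsplit, Multiset.card_map]
  have hrep : (p.parts.filter fun y => ¬ (y - 1 ≠ 0))
      = Multiset.replicate (Multiset.card (p.parts.filter fun y => ¬ (y - 1 ≠ 0))) 1 := by
    rw [Multiset.eq_replicate_card]
    intro b hb
    have h1 := Multiset.of_mem_filter hb
    have h2 := p.parts_pos (Multiset.mem_of_mem_filter hb)
    omega
  have hcount : Multiset.card p.parts + m + 1 - m - 1 - (Multiset.card s + 1 - 1)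
      = Multiset.card (p.parts.filter fun y => ¬ (y - 1 ≠ 0)) := by
    omega
  rw [hcount, hmapped, ← hrep, Multiset.filter_add_not]

lemma dysonInv_card (q : (N + m + 1).Partition) (hq : (m : ℤ) ≤ q.rank) :
    Multiset.card (dysonInv m N q hq).parts = q.parts.sup - m - 1 := by
  have hne : q.parts ≠ 0 := by
    intro h0
    have := q.parts_sum
    rw [h0] at this
    simp at this
  have hmem : q.parts.sup ∈ q.parts := sup_mem_of_ne_zero hne
  have hcard : Multiset.card (q.parts.erase q.parts.sup) + 1 = Multiset.card q.parts := by
    rw [← Multiset.card_cons, Multiset.cons_erase hmem]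
  have hrank : Multiset.card q.parts + m ≤ q.parts.sup := by
    have := hq
    unfold Nat.Partition.rank at this
    omega
  show Multiset.card (((q.parts.erase q.parts.sup).map (· + 1)) +
    Multiset.replicate (q.parts.sup - m - 1 - (Multiset.card q.parts - 1)) 1)
    = q.parts.sup - m - 1
  rw [Multiset.card_add, Multiset.card_map, Multiset.card_replicate]
  omega

lemma dysonInv_rank (q : (N + m + 1).Partition) (hq : (m : ℤ) ≤ q.rank) :
    (dysonInv m N q hq).rank ≤ (m : ℤ) + 2 := by
  have hne : q.parts ≠ 0 := by
    intro h0
    have := q.parts_sum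
    rw [h0] at this
    simp at this
  have hmem : q.parts.sup ∈ q.parts := sup_mem_of_ne_zero hne
  have hcard1 : 1 ≤ Multiset.card q.parts :=
    Multiset.card_pos_iff_exists_mem.2 ⟨_, hmem⟩
  have hrank : Multiset.card q.parts + m ≤ q.parts.sup := by
    have := hq
    unfold Nat.Partition.rank at this
    omega
  have hsup : (dysonInv m N q hq).parts.sup ≤ q.parts.sup + 1 := by
    rw [Multiset.sup_le]
    intro b hb
    rcases Multiset.mem_add.1 hb with hb | hb
    · rcases Multiset.mem_map.1 hb with ⟨x, hx, rfl⟩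
      have := Multiset.le_sup (Multiset.mem_of_mem_erase hx)
      omega
    · have := Multiset.eq_of_mem_replicate hb
      omega
  have hcard := dysonInv_card m N q hq
  unfold Nat.Partition.rank
  omega

lemma dysonMap_dysonInv (q : (N + m + 1).Partition) (hq : (m : ℤ) ≤ q.rank) :
    dysonMap m N (dysonInv m N q hq) = q := by
  apply Nat.Partition.ext
  have hne : q.parts ≠ 0 := by
    intro h0
    have := q.parts_sum
    rw [h0] at this
    simp at this
  have hmem : q.parts.sup ∈ q.parts := sup_mem_of_ne_zero hne
  have hcard1 : 1 ≤ Multiset.card q.parts :=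
    Multiset.card_pos_iff_exists_mem.2 ⟨_, hmem⟩
  have hrank : Multiset.card q.parts + m ≤ q.parts.sup := by
    have := hq
    unfold Nat.Partition.rank at this
    omega
  rw [dysonMap_parts, dysonInv_card m N q hq]
  have hparts : (dysonInv m N q hq).parts = ((q.parts.erase q.parts.sup).map (· + 1)) +
      Multiset.replicate (q.parts.sup - m - 1 - (Multiset.card q.parts - 1)) 1 := rfl
  have hhead : q.parts.sup - m - 1 + m + 1 = q.parts.sup := by omega
  rw [hparts]
  rw [Multiset.map_add, Multiset.map_map, Multiset.map_replicate]
  have h1 : ((q.parts.erase q.parts.sup).map ((· - 1) ∘ (· + 1))) = q.parts.erase q.parts.sup := by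
    have : ∀ y ∈ q.parts.erase q.parts.sup, ((· - 1) ∘ (· + 1)) y = y := by
      intro y _
      simp
    rw [Multiset.map_congr rfl this, Multiset.map_id']
  rw [h1]
  rw [Multiset.filter_add]
  have h2 : (q.parts.erase q.parts.sup).filter (· ≠ 0) = q.parts.erase q.parts.sup := by
    rw [Multiset.filter_eq_self]
    intro a ha
    have := q.parts_pos (Multiset.mem_of_mem_erase ha)
    omega
  have h3 : (Multiset.replicate (q.parts.sup - m - 1 - (Multiset.card q.parts - 1)) ((1:ℕ) - 1)).filter (· ≠ 0) = 0 := by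
    rw [Multiset.filter_eq_nil]
    intro a ha
    have := Multiset.eq_of_mem_replicate ha
    omega
  rw [h2, h3, add_zero, hhead, Multiset.cons_erase hmem]

lemma dyson_count :
    ((Finset.univ : Finset N.Partition).filter fun p => p.rank ≤ (m : ℤ) + 2).card
      = ((Finset.univ : Finset (N + m + 1).Partition).filter
          fun q => (m : ℤ) ≤ q.rank).card := by
  refine Finset.card_bij' (fun p _ => dysonMap m N p)
    (fun q hq => dysonInv m N q (Finset.mem_filter.1 hq).2) ?hi ?hj ?li ?ri
  case hi =>
    intro p hp
    rw [Finset.mem_filter]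
    exact ⟨Finset.mem_univ _, dysonMap_rank m N p (Finset.mem_filter.1 hp).2⟩
  case hj =>
    intro q hq
    rw [Finset.mem_filter]
    exact ⟨Finset.mem_univ _, dysonInv_rank m N q (Finset.mem_filter.1 hq).2⟩
  case li =>
    intro p hp
    exact dysonInv_dysonMap m N p (Finset.mem_filter.1 hp).2 _
  case ri =>
    intro q hq
    exact dysonMap_dysonInv m N q (Finset.mem_filter.1 hq).2

end Dyson


lemma Ng_compl (m N : ℕ) : Ng m (N + m + 1) + Ng (m + 3) N = pcard N := by
  classical
  have h1 : Ng m (N + m + 1)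
      = ((Finset.univ : Finset N.Partition).filter fun p => p.rank ≤ (m : ℤ) + 2).card :=
    (dyson_count m N).symm
  have h2 : Ng (m + 3) N
      = ((Finset.univ : Finset N.Partition).filter fun p => ¬ (p.rank ≤ (m : ℤ) + 2)).card := by
    rw [Ng]
    congr 1
    apply Finset.filter_congr
    intro p _
    push_cast
    constructor
    · intro h; omega
    · intro h; omega
  rw [h1, h2, Finset.card_filter_add_card_filter_not, pcard, Finset.card_univ]

noncomputable def PGF : PowerSeries ℤ := PowerSeries.mk fun n => (pcard n : ℤ)

noncomputable def NgS (m : ℕ) : PowerSeries ℤ := PowerSeries.mk fun n => (Ng m n : ℤ)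

lemma NgS_eq (m : ℕ) (hm : 1 ≤ m) : NgS m = (PGF - NgS (m + 3)) * X ^ (m + 1) := by
  ext n
  rw [NgS, coeff_mk, PowerSeries.coeff_mul_X_pow']
  split_ifs with h
  · have hN : n - (m + 1) + m + 1 = n := by omega
    have hc := Ng_compl m (n - (m + 1))
    rw [hN] at hc
    have hle : Ng (m + 3) (n - (m + 1)) ≤ pcard (n - (m + 1)) := by omega
    rw [map_sub, PGF, NgS, coeff_mk, coeff_mk]
    push_cast
    omega
  · rw [Ng_eq_zero (by omega) hm]
    simp

section GFMachine

open Finset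
open scoped Classical

/-- A convenience constructor for the power series whose coefficients indicate a subset. -/
noncomputable def indicatorSeries (α : Type*) [Semiring α] (s : Set ℕ) : PowerSeries α :=
  PowerSeries.mk fun n => if n ∈ s then 1 else 0

variable {α : Type*}

theorem coeff_indicator (s : Set ℕ) [Semiring α] (n : ℕ) :
    coeff (R := α) n (indicatorSeries _ s) = if n ∈ s then 1 else 0 :=
  coeff_mk _ _

theorem coeff_indicator_pos (s : Set ℕ) [Semiring α] (n : ℕ) (h : n ∈ s) :
    coeff (R := α) n (indicatorSeries _ s) = 1 := by rw [coeff_indicator, if_pos h]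

theorem coeff_indicator_neg (s : Set ℕ) [Semiring α] (n : ℕ) (h : n ∉ s) :
    coeff (R := α) n (indicatorSeries _ s) = 0 := by rw [coeff_indicator, if_neg h]

-- The main workhorse, copied from `Archive.Wiedijk100Theorems.Partition`.
theorem partialGF_prop (α : Type*) [CommSemiring α] (n : ℕ) (s : Finset ℕ) (hs : ∀ i ∈ s, 0 < i)
    (c : ℕ → Set ℕ) (hc : ∀ i, i ∉ s → 0 ∈ c i) :
    #{p : n.Partition | (∀ j, p.parts.count j ∈ c j) ∧ ∀ j ∈ p.parts, j ∈ s} =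
      coeff (R := α) n (∏ i ∈ s, indicatorSeries α ((· * i) '' c i)) := by
  simp_rw [coeff_prod, coeff_indicator, prod_boole, sum_boole]
  apply congr_arg
  simp only [mem_univ, forall_true_left, not_and, not_forall, exists_prop,
    Set.mem_image, not_exists]
  set φ : (a : Nat.Partition n) →
    a ∈ filter (fun p ↦ (∀ (j : ℕ), Multiset.count j p.parts ∈ c j) ∧ ∀ j ∈ p.parts, j ∈ s) univ →
    ℕ →₀ ℕ := fun p _ => {
      toFun := fun i => Multiset.count i p.parts • i
      support := Finset.filter (fun i => i ≠ 0) p.parts.toFinset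
      mem_support_toFun := fun a => by
        simp only [smul_eq_mul, ne_eq, mul_eq_zero, Multiset.count_eq_zero]
        rw [not_or, not_not]
        simp only [Multiset.mem_toFinset, not_not, mem_filter] }
  refine Finset.card_bij φ ?_ ?_ ?_
  · intro a ha
    simp only [φ, not_forall, not_exists, not_and, exists_prop, mem_filter]
    rw [mem_finsuppAntidiag]
    dsimp only [ne_eq, smul_eq_mul, id_eq, eq_mpr_eq_cast, le_eq_subset, Finsupp.coe_mk]
    simp only [mem_univ, forall_true_left, not_and, not_forall, exists_prop,
      mem_filter, true_and] at ha
    refine ⟨⟨?_, fun i ↦ ?_⟩, fun i _ ↦ ⟨a.parts.count i, ha.1 i, rfl⟩⟩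
    · conv_rhs => simp [← a.parts_sum]
      rw [sum_multiset_count_of_subset _ s]
      · simp only [smul_eq_mul]
      · intro i
        simp only [Multiset.mem_toFinset, not_not, mem_filter]
        apply ha.2
    · simp only [ne_eq, Multiset.mem_toFinset, not_not, mem_filter, and_imp]
      exact fun hi _ ↦ ha.2 i hi
  · intro p₁ hp₁ p₂ hp₂ h
    apply Nat.Partition.ext
    simp only [true_and, mem_univ, mem_filter] at hp₁ hp₂
    ext i
    simp only [φ, ne_eq, Multiset.mem_toFinset, not_not, smul_eq_mul, Finsupp.mk.injEq] at h
    by_cases hi : i = 0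
    · rw [hi]
      rw [Multiset.count_eq_zero_of_notMem]
      · rw [Multiset.count_eq_zero_of_notMem]
        intro a; exact Nat.lt_irrefl 0 (hs 0 (hp₂.2 0 a))
      intro a; exact Nat.lt_irrefl 0 (hs 0 (hp₁.2 0 a))
    · rw [← mul_left_inj' hi]
      rw [funext_iff] at h
      exact h.2 i
  · simp only [φ, mem_filter, mem_finsuppAntidiag, mem_univ, exists_prop, true_and, and_assoc]
    rintro f ⟨hf, hf₃, hf₄⟩
    have hf' : f ∈ finsuppAntidiag s n := mem_finsuppAntidiag.mpr ⟨hf, hf₃⟩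
    simp only [mem_finsuppAntidiag] at hf'
    refine ⟨⟨∑ i ∈ s, Multiset.replicate (f i / i) i, ?_, ?_⟩, ?_, ?_, ?_⟩
    · intro i hi
      simp only [exists_prop, Multiset.mem_sum, mem_map, Function.Embedding.coeFn_mk] at hi
      rcases hi with ⟨t, ht, z⟩
      apply hs
      rwa [Multiset.eq_of_mem_replicate z]
    · simp_rw [Multiset.sum_sum, Multiset.sum_replicate, Nat.nsmul_eq_mul]
      rw [← hf'.1]
      refine sum_congr rfl fun i hi => Nat.div_mul_cancel ?_
      rcases hf₄ i hi with ⟨w, _, hw₂⟩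
      rw [← hw₂]
      exact dvd_mul_left _ _
    · intro i
      simp_rw [Multiset.count_sum', Multiset.count_replicate, sum_ite_eq']
      split_ifs with h
      · rcases hf₄ i h with ⟨w, hw₁, hw₂⟩
        rwa [← hw₂, Nat.mul_div_cancel _ (hs i h)]
      · exact hc _ h
    · intro i hi
      rw [Multiset.mem_sum] at hi
      rcases hi with ⟨j, hj₁, hj₂⟩
      rwa [Multiset.eq_of_mem_replicate hj₂]
    · ext i
      simp_rw [Multiset.count_sum', Multiset.count_replicate, sum_ite_eq']
      simp only [ne_eq, Multiset.mem_toFinset, not_not, smul_eq_mul, ite_mul,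
        zero_mul, Finsupp.coe_mk]
      split_ifs with h
      · apply Nat.div_mul_cancel
        rcases hf₄ i h with ⟨w, _, hw₂⟩
        apply Dvd.intro_left _ hw₂
      · apply symm
        rw [← Finsupp.notMem_support_iff]
        exact notMem_mono hf'.2 h

lemma pcard_eq_coeff {j M : ℕ} (h : j ≤ M) :
    (pcard j : ℤ) = coeff (R := ℤ) j (∏ i ∈ range M, indicatorSeries ℤ {k | (i + 1) ∣ k}) := by
  have hprop := partialGF_prop ℤ j
      ((range M).map ⟨fun i => i + 1, add_left_injective 1⟩)
      (by intro i hi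
          simp only [mem_map, Function.Embedding.coeFn_mk, mem_range] at hi
          rcases hi with ⟨t, _, rfl⟩
          omega)
      (fun _ => Set.univ) (fun _ _ => trivial)
  have hprod : ∏ i ∈ (range M).map ⟨fun i => i + 1, add_left_injective 1⟩,
      indicatorSeries ℤ ((· * i) '' Set.univ)
      = ∏ i ∈ range M, indicatorSeries ℤ {k | (i + 1) ∣ k} := by
    rw [Finset.prod_map]
    refine Finset.prod_congr rfl fun i _ => ?_
    have hset : ((· * ((fun i => i + 1) i)) '' Set.univ) = {k | (i + 1) ∣ k} := by
      ext x
      simp only [Set.image_univ, Set.mem_range, Set.mem_setOf_eq]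
      constructor
      · rintro ⟨y, rfl⟩
        exact Dvd.intro_left y rfl
      · rintro ⟨c, rfl⟩
        exact ⟨c, mul_comm _ _⟩
    rw [Function.Embedding.coeFn_mk, hset]
  rw [hprod] at hprop
  rw [← hprop]
  norm_cast
  rw [pcard, ← Finset.card_univ]
  congr 1
  symm
  rw [Finset.eq_univ_iff_forall]
  intro p
  simp only [Finset.mem_filter, Finset.mem_univ, true_and, mem_map,
    Function.Embedding.coeFn_mk, mem_range, Set.mem_univ, implies_true, true_and]
  intro i hi
  have h1 := p.parts_pos hi
  have h2 : i ≤ j := by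
    have := Multiset.single_le_sum (fun x _ => Nat.zero_le x) i hi
    rwa [p.parts_sum] at this
  exact ⟨i - 1, by omega, by omega⟩

lemma one_sub_X_pow_mul_indicator (i : ℕ) :
    ((1 : PowerSeries ℤ) - X ^ (i + 1)) * indicatorSeries ℤ {k | (i + 1) ∣ k} = 1 := by
  ext n
  rw [sub_mul, one_mul, map_sub,
    mul_comm ((X : PowerSeries ℤ) ^ (i + 1)) (indicatorSeries ℤ {k | (i + 1) ∣ k}),
    PowerSeries.coeff_mul_X_pow']
  simp only [coeff_indicator, Set.mem_setOf_eq, PowerSeries.coeff_one]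
  by_cases hn : n = 0
  · subst hn
    simp
  · by_cases hd : (i + 1) ∣ n
    · have h1 : i + 1 ≤ n := Nat.le_of_dvd (by omega) hd
      have h2 : (i + 1) ∣ (n - (i + 1)) := (Nat.dvd_sub hd dvd_rfl)
      rw [if_pos hd, if_pos h1, if_pos h2, if_neg hn]
      ring
    · rw [if_neg hd, if_neg hn]
      split_ifs with h1 h2
      · exfalso
        apply hd
        have hn2 : n = (n - (i + 1)) + (i + 1) := by omega
        rw [hn2]
        exact Nat.dvd_add h2 dvd_rfl
      · ring
      · ring

lemma coeff_prod_stable (i M : ℕ) (h : i < M) :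
    coeff (R := ℤ) i (∏ n ∈ range M, (1 - (X : PowerSeries ℤ) ^ (n + 1)))
      = coeff (R := ℤ) i (∏ n ∈ range (i + 1), (1 - (X : PowerSeries ℤ) ^ (n + 1))) := by
  induction M with
  | zero => omega
  | succ M ih =>
    rcases Nat.lt_or_ge i M with hM | hM
    · rw [← ih hM, prod_range_succ, mul_sub, mul_one, map_sub,
        PowerSeries.coeff_mul_X_pow', if_neg (by omega)]
      ring
    · have : M = i := by omega
      subst this
      rfl

lemma coeff_qPochhammerInf (i M : ℕ) (h : i < M) :
    coeff (R := ℤ) i qPochhammerInf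
      = coeff (R := ℤ) i (∏ n ∈ range M, (1 - (X : PowerSeries ℤ) ^ (n + 1))) := by
  rw [qPochhammerInf, coeff_mk, coeff_prod_stable i M h, coeff_prod_stable i (i+1) (by omega)]

lemma qPoch_mul_PGF : qPochhammerInf * PGF = 1 := by
  ext N
  rw [PowerSeries.coeff_mul]
  have hstep : ∀ p ∈ Finset.HasAntidiagonal.antidiagonal N,
      coeff (R := ℤ) p.1 qPochhammerInf * coeff (R := ℤ) p.2 PGF
        = coeff (R := ℤ) p.1 (∏ n ∈ range (N+1), (1 - (X : PowerSeries ℤ) ^ (n + 1)))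
          * coeff (R := ℤ) p.2 (∏ i ∈ range (N+1), indicatorSeries ℤ {k | (i + 1) ∣ k}) := by
    intro p hp
    have hmem := Finset.HasAntidiagonal.mem_antidiagonal.1 hp
    rw [coeff_qPochhammerInf p.1 (N+1) (by omega), PGF, coeff_mk,
      pcard_eq_coeff (show p.2 ≤ N+1 by omega)]
  rw [Finset.sum_congr rfl hstep, ← PowerSeries.coeff_mul, ← Finset.prod_mul_distrib,
    Finset.prod_congr rfl (fun i (_ : i ∈ range (N+1)) => one_sub_X_pow_mul_indicator i),
    Finset.prod_const_one]

end GFMachine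
/-- pentagonal numbers -/
def pent (s : ℕ) : ℕ := s * (3 * s - 1) / 2

lemma pent_succ (s : ℕ) : pent (s + 1) = pent s + 3 * s + 1 := by
  have key : (s + 1) * (3 * (s + 1) - 1) = s * (3 * s - 1) + 2 * (3 * s + 1) := by
    cases s with
    | zero => rfl
    | succ r =>
      have h1 : 3 * (r + 1 + 1) - 1 = 3 * r + 5 := by omega
      have h2 : 3 * (r + 1) - 1 = 3 * r + 2 := by omega
      rw [h1, h2]
      ring
  rw [pent, pent, key, Nat.add_mul_div_left _ _ (by norm_num : 0 < 2)]
  omega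

lemma le_pent (s : ℕ) : s ≤ pent s := by
  induction s with
  | zero => simp [pent]
  | succ r ih =>
    rw [pent_succ]
    omega

/-- `T m n` is the coefficient of `q^n` in `Σ_{s≥1} (-1)^(s-1) q^(pent s + m s)`. -/
noncomputable def T (m n : ℕ) : ℤ :=
  ∑ s ∈ Finset.range n, (if n = pent (s + 1) + m * (s + 1) then (-1 : ℤ) ^ s else 0)

lemma T_eq_zero {m n : ℕ} (hm : 1 ≤ m) (h : n < m + 1) : T m n = 0 := by
  rw [T]
  apply Finset.sum_eq_zero
  intro s _
  rw [if_neg]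
  intro heq
  have h1 := le_pent (s + 1)
  have h2 : m ≤ m * (s + 1) := Nat.le_mul_of_pos_right m (by omega)
  omega

lemma T_rec (m n : ℕ) (hm : 1 ≤ m) (hn : m + 1 ≤ n) :
    T m n = (if n = m + 1 then 1 else 0) - T (m + 3) (n - m - 1) := by
  obtain ⟨n', rfl⟩ : ∃ n', n = n' + 1 := ⟨n - 1, by omega⟩
  rw [T, Finset.sum_range_succ']
  have hzero : (if n' + 1 = pent (0 + 1) + m * (0 + 1) then (-1 : ℤ) ^ 0 else 0)
      = (if n' + 1 = m + 1 then 1 else 0) := by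
    have : pent (0 + 1) + m * (0 + 1) = m + 1 := by
      rw [show pent 1 = 1 from rfl]
      ring
    rw [this]
    simp
  rw [hzero]
  have hmain : ∑ s ∈ Finset.range n',
      (if n' + 1 = pent (s + 1 + 1) + m * (s + 1 + 1) then (-1 : ℤ) ^ (s + 1) else 0)
      = - T (m + 3) (n' + 1 - m - 1) := by
    rw [T, ← Finset.sum_neg_distrib]
    rw [Finset.sum_subset (Finset.range_subset_range.2 (show n' + 1 - m - 1 ≤ n' by omega))]
    · apply Finset.sum_congr rfl
      intro s _
      have hp : pent (s + 1 + 1) = pent (s + 1) + 3 * s + 4 := by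
        rw [pent_succ (s + 1)]
        omega
      have hm1 : m * (s + 1 + 1) = m * (s + 1) + m := by ring
      have hm2 : (m + 3) * (s + 1) = m * (s + 1) + 3 * s + 3 := by ring
      have hcond : (n' + 1 = pent (s + 1 + 1) + m * (s + 1 + 1))
          ↔ (n' + 1 - m - 1 = pent (s + 1) + (m + 3) * (s + 1)) := by
        constructor
        · intro h; omega
        · intro h; omega
      by_cases hc : n' + 1 = pent (s + 1 + 1) + m * (s + 1 + 1)
      · rw [if_pos hc, if_pos (hcond.1 hc), pow_succ]
        ring
      · rw [if_neg hc, if_neg (fun hcc => hc (hcond.2 hcc))]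
        ring
    · intro s hs hns
      rw [Finset.mem_range] at hs
      rw [Finset.mem_range, not_lt] at hns
      rw [if_neg, neg_zero]
      intro heq
      have h1 := le_pent (s + 1)
      have h2 : s + 1 ≤ (m + 3) * (s + 1) := Nat.le_mul_of_pos_left (s + 1) (show 0 < m + 3 by omega)
      omega
  rw [hmain]
  split_ifs <;> ring

lemma coeff_qPoch_mul_NgS : ∀ n m : ℕ, 1 ≤ m →
    (coeff (R := ℤ) n) (qPochhammerInf * NgS m) = T m n := by
  intro n
  induction n using Nat.strong_induction_on with
  | _ n ih =>
    intro m hm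
    have key : qPochhammerInf * NgS m = (1 - qPochhammerInf * NgS (m + 3)) * X ^ (m + 1) := by
      rw [NgS_eq m hm, ← mul_assoc, mul_sub, qPoch_mul_PGF]
    rw [key, PowerSeries.coeff_mul_X_pow']
    split_ifs with h
    · rw [map_sub, PowerSeries.coeff_one,
        ih (n - (m + 1)) (by omega) (m + 3) (by omega),
        T_rec m n hm (by omega)]
      have : (n - (m + 1) = 0) ↔ (n = m + 1) := by omega
      have hnm : n - (m + 1) = n - m - 1 := by omega
      rw [hnm]
      by_cases hc : n = m + 1
      · rw [if_pos hc, if_pos (by omega)]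
      · rw [if_neg hc, if_neg (by omega)]
    · rw [T_eq_zero hm (by omega)]

lemma one_sub_X_pow_mul_indicator' (s : ℕ) (hs : 0 < s) :
    ((1 : PowerSeries ℤ) - X ^ s) * indicatorSeries ℤ {k | s ∣ k} = 1 := by
  obtain ⟨i, rfl⟩ : ∃ i, s = i + 1 := ⟨s - 1, by omega⟩
  exact one_sub_X_pow_mul_indicator i

/-- the power series `1/(1-X^s)^(r+1)` -/
noncomputable def Bgeo (s r : ℕ) : PowerSeries ℤ :=
  PowerSeries.mk fun n => if s ∣ n then ((n / s + r).choose r : ℤ) else 0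

lemma one_sub_pow_mul_Bgeo (s r : ℕ) (hs : 0 < s) :
    ((1 : PowerSeries ℤ) - X ^ s) ^ (r + 1) * Bgeo s r = 1 := by
  induction r with
  | zero =>
    have hB : Bgeo s 0 = indicatorSeries ℤ {k | s ∣ k} := by
      ext n
      rw [Bgeo, coeff_mk, coeff_indicator]
      simp only [Set.mem_setOf_eq, Nat.choose_zero_right, Nat.cast_one]
    rw [pow_one, hB]
    exact one_sub_X_pow_mul_indicator' s hs
  | succ r ih =>
    have hstep : ((1 : PowerSeries ℤ) - X ^ s) * Bgeo s (r + 1) = Bgeo s r := by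
      ext n
      rw [sub_mul, one_mul, map_sub, mul_comm ((X : PowerSeries ℤ) ^ s) (Bgeo s (r + 1)),
        PowerSeries.coeff_mul_X_pow']
      simp only [Bgeo, coeff_mk]
      by_cases hd : s ∣ n
      · by_cases hn : n = 0
        · subst hn
          rw [if_pos hd, if_neg (by omega), if_pos (dvd_zero s)]
          simp
        · have hsn : s ≤ n := Nat.le_of_dvd (by omega) hd
          have hd2 : s ∣ (n - s) := Nat.dvd_sub hd dvd_rfl
          rw [if_pos hd, if_pos hsn, if_pos hd2, if_pos hd]
          obtain ⟨q, rfl⟩ := hd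
          have hq1 : 1 ≤ q := by
            rcases Nat.eq_zero_or_pos q with rfl | h
            · omega
            · omega
          have hdiv1 : s * q / s = q := Nat.mul_div_cancel_left q hs
          have hdiv2 : (s * q - s) / s = q - 1 := by
            have : s * q - s = s * (q - 1) := by
              rw [Nat.mul_sub]
              omega
            rw [this, Nat.mul_div_cancel_left _ hs]
          rw [hdiv1, hdiv2]
          have hpascal : (q + (r + 1)).choose (r + 1)
              = (q - 1 + (r + 1)).choose (r + 1) + (q + r).choose r := by
            have h1 : q + (r + 1) = (q + r) + 1 := by omega
            have h2 : q - 1 + (r + 1) = q + r := by omega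
            have h3 : (q + r + 1).choose (r + 1) = (q + r).choose r + (q + r).choose (r + 1) :=
              Nat.choose_succ_succ _ _
            rw [h1, h2]
            omega
          push_cast [hpascal]
          ring
      · rw [if_neg hd, if_neg hd]
        split_ifs with h1 h2
        · exfalso
          apply hd
          have : n = (n - s) + s := by omega
          rw [this]
          exact Nat.dvd_add h2 dvd_rfl
        · ring
        · ring
    have hpow : ((1 : PowerSeries ℤ) - X ^ s) ^ (r + 1 + 1)
        = ((1 : PowerSeries ℤ) - X ^ s) ^ (r + 1) * ((1 : PowerSeries ℤ) - X ^ s) := pow_succ _ _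
    rw [hpow, mul_assoc, hstep, ih]

lemma ring_inverse_eq {R : Type*} [CommRing R] {a b : R} (h : a * b = 1) :
    Ring.inverse a = b := by
  have hu : IsUnit a := IsUnit.of_mul_eq_one b h
  calc Ring.inverse a = Ring.inverse a * (a * b) := by rw [h, mul_one]
    _ = (Ring.inverse a * a) * b := by ring
    _ = b := by rw [Ring.inverse_mul_cancel a hu, one_mul]



lemma rankCount_eq_zero {n : ℕ} {m : ℤ} (hm : 1 ≤ m) (h : (n : ℤ) ≤ m) : rankCount m n = 0 := by
  rw [rankCount_eq, Finset.card_eq_zero, Finset.filter_eq_empty_iff]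
  intro p _
  rcases Nat.eq_zero_or_pos n with rfl | hn
  · rw [rank_zero p]
    omega
  · have := rank_le hn p
    omega

lemma etaBarOdd_eq_sum (k n : ℕ) (hk : 1 ≤ k) :
    etaBarOdd k n
      = ∑ m ∈ Finset.range n,
          ((m + k).choose (2 * k - 1) : ℤ) * (rankCount ((m : ℤ) + 1) n : ℤ) := by
  rw [etaBarOdd, tsum_eq_sum (s := Finset.range n) ?hvanish]
  · apply Finset.sum_congr rfl
    intro m _
    congr 1
    have hcast : ((m : ℤ) + (k : ℤ)) = ((m + k : ℕ) : ℤ) := by push_cast; ring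
    rw [hcast, Ring.choose_natCast]
  case hvanish =>
    intro b hb
    rw [Finset.mem_range, not_lt] at hb
    have h0 : rankCount ((b : ℤ) + 1) n = 0 := by
      apply rankCount_eq_zero
      · omega
      · have : (n : ℤ) ≤ (b : ℤ) := by exact_mod_cast hb
        omega
    rw [h0]
    simp

lemma etaBarOdd_eq_Ng_sum (k n : ℕ) (hk : 1 ≤ k) :
    etaBarOdd k n
      = ∑ m ∈ Finset.range n, ((m + k - 1).choose (2 * k - 2) : ℤ) * (Ng (m + 1) n : ℤ) := by
  classical
  set a : ℕ → ℤ := fun j => ((j + k - 1).choose (2 * k - 1) : ℤ) with ha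
  set b : ℕ → ℤ := fun m => (Ng (m + 1) n : ℤ) with hb
  have h1 : ∀ m ∈ Finset.range n,
      ((m + k).choose (2 * k - 1) : ℤ) * (rankCount ((m : ℤ) + 1) n : ℤ)
        = (a (m + 1) - a m) * b m + (a m * b m - a (m + 1) * b (m + 1)) := by
    intro m _
    have hsplit := Ng_split (m + 1) n
    have hz : (Ng (m + 1) n : ℤ) = (rankCount ((m : ℤ) + 1) n : ℤ) + (Ng (m + 2) n : ℤ) := by
      have hzz := congrArg (Nat.cast : ℕ → ℤ) hsplit
      push_cast at hzz
      convert hzz using 3 <;> push_cast <;> ring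
    have hA : a (m + 1) = ((m + k).choose (2 * k - 1) : ℤ) := by
      simp only [ha]
      congr 2
      omega
    have hBm : b m = (Ng (m + 1) n : ℤ) := rfl
    have hBm1 : b (m + 1) = (Ng (m + 2) n : ℤ) := rfl
    rw [← hA]
    have hr : (rankCount ((m : ℤ) + 1) n : ℤ) = b m - b (m + 1) := by
      rw [hBm, hBm1]
      omega
    rw [hr]
    ring
  rw [etaBarOdd_eq_sum k n hk, Finset.sum_congr rfl h1, Finset.sum_add_distrib,
    Finset.sum_range_sub' (fun m => a m * b m) n]
  have ha0 : a 0 = 0 := by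
    simp only [ha]
    rw [Nat.choose_eq_zero_of_lt (by omega)]
    simp
  have hbn : b n = 0 := by
    simp only [hb]
    rw [Ng_eq_zero (by omega) (by omega)]
    simp
  rw [ha0, hbn]
  have hP : ∀ m ∈ Finset.range n,
      (a (m + 1) - a m) * b m = ((m + k - 1).choose (2 * k - 2) : ℤ) * b m := by
    intro m _
    congr 1
    simp only [ha]
    have h1' : m + 1 + k - 1 = (m + k - 1) + 1 := by omega
    have h3 : 2 * k - 1 = (2 * k - 2) + 1 := by omega
    have hps : ((m + k - 1) + 1).choose ((2 * k - 2) + 1)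
        = (m + k - 1).choose (2 * k - 2) + (m + k - 1).choose ((2 * k - 2) + 1) :=
      Nat.choose_succ_succ _ _
    rw [h1', h3, hps]
    push_cast
    ring
  rw [Finset.sum_congr rfl hP]
  ring

noncomputable def LHSseries (k : ℕ) : PowerSeries ℤ := PowerSeries.mk fun n => etaBarOdd k n

lemma coeff_L (k : ℕ) (hk : 1 ≤ k) {j N : ℕ} (h : j ≤ N) :
    coeff (R := ℤ) j (LHSseries k)
      = ∑ m ∈ Finset.range N, ((m + k - 1).choose (2 * k - 2) : ℤ) * (Ng (m + 1) j : ℤ) := by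
  rw [LHSseries, coeff_mk, etaBarOdd_eq_Ng_sum k j hk]
  apply Finset.sum_subset (Finset.range_subset_range.2 h)
  intro m _ hm
  rw [Finset.mem_range, not_lt] at hm
  rw [Ng_eq_zero (by omega) (by omega), Nat.cast_zero, mul_zero]

lemma coeff_qPoch_mul_L (k : ℕ) (hk : 1 ≤ k) (N : ℕ) :
    coeff (R := ℤ) N (qPochhammerInf * LHSseries k)
      = ∑ m ∈ Finset.range N, ((m + k - 1).choose (2 * k - 2) : ℤ) * T (m + 1) N := by
  rw [PowerSeries.coeff_mul]
  have h1 : ∀ p ∈ Finset.HasAntidiagonal.antidiagonal N,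
      coeff (R := ℤ) p.1 qPochhammerInf * coeff (R := ℤ) p.2 (LHSseries k)
        = ∑ m ∈ Finset.range N, ((m + k - 1).choose (2 * k - 2) : ℤ)
            * (coeff (R := ℤ) p.1 qPochhammerInf * coeff (R := ℤ) p.2 (NgS (m + 1))) := by
    intro p hp
    have hmem := Finset.HasAntidiagonal.mem_antidiagonal.1 hp
    rw [coeff_L k hk (show p.2 ≤ N by omega), Finset.mul_sum]
    apply Finset.sum_congr rfl
    intro m _
    rw [NgS, coeff_mk]
    ring
  rw [Finset.sum_congr rfl h1, Finset.sum_comm]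
  apply Finset.sum_congr rfl
  intro m _
  rw [← Finset.mul_sum, ← PowerSeries.coeff_mul, coeff_qPoch_mul_NgS N (m + 1) (by omega)]

lemma coeff_S (k : ℕ) (hk : 1 ≤ k) (N j : ℕ) :
    coeff (R := ℤ) N (((-1 : ℤ) ^ j) • ((X : PowerSeries ℤ) ^ (pent (j + 1) + k * (j + 1)) *
        Ring.inverse ((1 - (X : PowerSeries ℤ) ^ (j + 1)) ^ (2 * k - 1))))
      = (-1 : ℤ) ^ j *
          (if pent (j + 1) + k * (j + 1) ≤ N
              ∧ (j + 1) ∣ (N - (pent (j + 1) + k * (j + 1)))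
            then (((N - (pent (j + 1) + k * (j + 1))) / (j + 1) + (2 * k - 2)).choose
                (2 * k - 2) : ℤ)
            else 0) := by
  have hinv : Ring.inverse ((1 - (X : PowerSeries ℤ) ^ (j + 1)) ^ (2 * k - 1))
      = Bgeo (j + 1) (2 * k - 2) := by
    apply ring_inverse_eq
    have h2 : 2 * k - 1 = (2 * k - 2) + 1 := by omega
    rw [h2]
    exact one_sub_pow_mul_Bgeo (j + 1) (2 * k - 2) (by omega)
  rw [hinv, map_smul, mul_comm ((X : PowerSeries ℤ) ^ (pent (j + 1) + k * (j + 1)))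
      (Bgeo (j + 1) (2 * k - 2)), PowerSeries.coeff_mul_X_pow', smul_eq_mul]
  congr 1
  by_cases hE : pent (j + 1) + k * (j + 1) ≤ N
  · rw [if_pos hE, Bgeo, coeff_mk]
    by_cases hd : (j + 1) ∣ (N - (pent (j + 1) + k * (j + 1)))
    · rw [if_pos hd, if_pos ⟨hE, hd⟩]
    · rw [if_neg hd, if_neg (fun hc => hd hc.2)]
  · rw [if_neg hE, if_neg (fun hc => hE hc.1)]

lemma final_sum (k N : ℕ) (hk : 1 ≤ k) :
    ∑ m ∈ Finset.range N, ((m + k - 1).choose (2 * k - 2) : ℤ) * T (m + 1) N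
      = ∑ j ∈ Finset.range (N + 1), (-1 : ℤ) ^ j *
          (if pent (j + 1) + k * (j + 1) ≤ N
              ∧ (j + 1) ∣ (N - (pent (j + 1) + k * (j + 1)))
            then (((N - (pent (j + 1) + k * (j + 1))) / (j + 1) + (2 * k - 2)).choose
                (2 * k - 2) : ℤ)
            else 0) := by
  rw [Finset.sum_range_succ]
  have hlast : ¬ (pent (N + 1) + k * (N + 1) ≤ N
      ∧ (N + 1) ∣ (N - (pent (N + 1) + k * (N + 1)))) := by
    rintro ⟨hE, -⟩
    have h1 := le_pent (N + 1)
    have h2 : N + 1 ≤ k * (N + 1) := Nat.le_mul_of_pos_left _ (by omega)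
    omega
  rw [if_neg hlast, mul_zero, add_zero]
  have hswap : ∑ m ∈ Finset.range N, ((m + k - 1).choose (2 * k - 2) : ℤ) * T (m + 1) N
      = ∑ s ∈ Finset.range N, ∑ m ∈ Finset.range N,
          ((m + k - 1).choose (2 * k - 2) : ℤ) *
            (if N = pent (s + 1) + (m + 1) * (s + 1) then (-1 : ℤ) ^ s else 0) := by
    simp only [T, Finset.mul_sum]
    exact Finset.sum_comm
  rw [hswap]
  apply Finset.sum_congr rfl
  intro s _
  by_cases hA : ∃ m, N = pent (s + 1) + (m + 1) * (s + 1)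
  · obtain ⟨m₀, hm₀⟩ := hA
    have hm₀N : m₀ ∈ Finset.range N := by
      rw [Finset.mem_range]
      have h1 : s + 1 ≤ pent (s + 1) := le_pent (s + 1)
      have h2 : m₀ + 1 ≤ (m₀ + 1) * (s + 1) := Nat.le_mul_of_pos_right _ (by omega)
      omega
    have hsingle : ∑ m ∈ Finset.range N,
        ((m + k - 1).choose (2 * k - 2) : ℤ) *
          (if N = pent (s + 1) + (m + 1) * (s + 1) then (-1 : ℤ) ^ s else 0)
        = ((m₀ + k - 1).choose (2 * k - 2) : ℤ) *
          (if N = pent (s + 1) + (m₀ + 1) * (s + 1) then (-1 : ℤ) ^ s else 0) := by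
      apply Finset.sum_eq_single_of_mem m₀ hm₀N
      intro m _ hne
      rw [if_neg, mul_zero]
      intro heq
      apply hne
      have hmul : (m + 1) * (s + 1) = (m₀ + 1) * (s + 1) := by omega
      have := Nat.eq_of_mul_eq_mul_right (Nat.succ_pos s) hmul
      omega
    rw [hsingle, if_pos hm₀]
    by_cases hkm : k ≤ m₀ + 1
    · have hmul : k * (s + 1) ≤ (m₀ + 1) * (s + 1) := Nat.mul_le_mul_right _ hkm
      have hE : pent (s + 1) + k * (s + 1) ≤ N := by omega
      have hsub : N - (pent (s + 1) + k * (s + 1)) = (m₀ + 1 - k) * (s + 1) := by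
        have h5 : (m₀ + 1 - k) * (s + 1) = (m₀ + 1) * (s + 1) - k * (s + 1) :=
          Nat.sub_mul _ _ _
        omega
      have hdvd : (s + 1) ∣ (N - (pent (s + 1) + k * (s + 1))) := by
        rw [hsub]
        exact dvd_mul_left _ _
      have hq : (N - (pent (s + 1) + k * (s + 1))) / (s + 1) = m₀ + 1 - k := by
        rw [hsub]
        exact Nat.mul_div_cancel _ (Nat.succ_pos s)
      rw [if_pos ⟨hE, hdvd⟩, hq]
      have hidx : m₀ + 1 - k + (2 * k - 2) = m₀ + k - 1 := by omega
      rw [hidx]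
      ring
    · have hc0 : (m₀ + k - 1).choose (2 * k - 2) = 0 := Nat.choose_eq_zero_of_lt (by omega)
      have hE : ¬ (pent (s + 1) + k * (s + 1) ≤ N
          ∧ (s + 1) ∣ (N - (pent (s + 1) + k * (s + 1)))) := by
        rintro ⟨hE, -⟩
        have : (m₀ + 1) * (s + 1) < k * (s + 1) :=
          Nat.mul_lt_mul_of_pos_right (by omega) (show 0 < s + 1 by omega)
        omega
      rw [if_neg hE, hc0]
      simp
  · have hg : ¬ (pent (s + 1) + k * (s + 1) ≤ N
        ∧ (s + 1) ∣ (N - (pent (s + 1) + k * (s + 1)))) := by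
      rintro ⟨hE, t, ht⟩
      apply hA
      refine ⟨k + t - 1, ?_⟩
      have hkt : k + t - 1 + 1 = k + t := by omega
      have hd : (k + t) * (s + 1) = k * (s + 1) + t * (s + 1) := Nat.add_mul _ _ _
      have hc : (s + 1) * t = t * (s + 1) := Nat.mul_comm _ _
      rw [hkt, hd]
      omega
    rw [if_neg hg, mul_zero]
    apply Finset.sum_eq_zero
    intro m _
    rw [if_neg (fun hmm => hA ⟨m, hmm⟩), mul_zero]

end EtaAux

/-- `Σ_{n≥1} η̄_{2k-1}(n) q^n = (q;q)_∞⁻¹ · Σ_{n≥1} (-1)^(n-1)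
q^(n(3n-1)/2 + kn) / (1-q^n)^(2k-1)` for `k ≥ 1` (the summation index `j : ℕ` below stands
for `n = j + 1`; the coefficient of `q^0` on the left vanishes since `η̄_{2k-1}(0) = 0`). -/
theorem etaBarOdd_generating_function (k : ℕ) (hk : 1 ≤ k) :
    (PowerSeries.mk fun n => etaBarOdd k n) =
      Ring.inverse qPochhammerInf *
        seriesSum (fun j =>
          ((-1 : ℤ) ^ j) •
            (PowerSeries.X ^ ((j + 1) * (3 * (j + 1) - 1) / 2 + k * (j + 1)) *
              Ring.inverse ((1 - PowerSeries.X ^ (j + 1)) ^ (2 * k - 1)))) := by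
  have hLS : qPochhammerInf * (PowerSeries.mk fun n => etaBarOdd k n)
      = seriesSum (fun j =>
          ((-1 : ℤ) ^ j) •
            (PowerSeries.X ^ ((j + 1) * (3 * (j + 1) - 1) / 2 + k * (j + 1)) *
              Ring.inverse ((1 - PowerSeries.X ^ (j + 1)) ^ (2 * k - 1)))) := by
    ext N
    rw [show (PowerSeries.mk fun n => etaBarOdd k n) = EtaAux.LHSseries k from rfl,
      EtaAux.coeff_qPoch_mul_L k hk N, seriesSum, coeff_mk, EtaAux.final_sum k N hk]
    apply Finset.sum_congr rfl
    intro j _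
    rw [show (j + 1) * (3 * (j + 1) - 1) / 2 = EtaAux.pent (j + 1) from rfl]
    exact (EtaAux.coeff_S k hk N j).symm
  have hu : IsUnit qPochhammerInf := by
    rw [PowerSeries.isUnit_iff_constantCoeff]
    have h0 : constantCoeff qPochhammerInf = 1 := by
      rw [← PowerSeries.coeff_zero_eq_constantCoeff_apply,
        EtaAux.coeff_qPochhammerInf 0 1 (by omega), Finset.prod_range_one]
      simp
    rw [h0]
    exact isUnit_one
  calc (PowerSeries.mk fun n => etaBarOdd k n)
      = (Ring.inverse qPochhammerInf * qPochhammerInf) *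
          (PowerSeries.mk fun n => etaBarOdd k n) := by
        rw [Ring.inverse_mul_cancel _ hu, one_mul]
    _ = Ring.inverse qPochhammerInf *
          (qPochhammerInf * (PowerSeries.mk fun n => etaBarOdd k n)) := by ring
    _ = _ := by rw [hLS]
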